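/- (Exactness at breakdown) Let A ∈ ℚ^{n×n} be invertible and suppose A V_m = V_m H_m with V_m ∈ ℚ^{n×m} having right-linearly independent columns and H_m ∈ ℚ^{m×m}. Then H_m is invertible, and for r₀ = V_m (β e₁) the vector x_m = x₀ + V_m H_m⁻¹ (β e₁) solves A x_m = A x₀ + r₀. -/
import Mathlib


open Quaternion Matrix

theorem exactness_at_breakdown {n m : ℕ}
    (A : Matrix (Fin n) (Fin n) ℍ[ℝ])
    (Ainv : Matrix (Fin n) (Fin n) ℍ[ℝ])
    (hA : A * Ainv = 1 ∧ Ainv * A = 1)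
    (Vm : Matrix (Fin n) (Fin m) ℍ[ℝ])
    (Hm : Matrix (Fin m) (Fin m) ℍ[ℝ])
    (hAV : A * Vm = Vm * Hm)
    (hind : ∀ α : Fin m → ℍ[ℝ], Vm *ᵥ α = 0 → α = 0) :
    ∃ Hinv : Matrix (Fin m) (Fin m) ℍ[ℝ],
      Hm * Hinv = 1 ∧ Hinv * Hm = 1 ∧
      ∀ (x₀ : Fin n → ℍ[ℝ]) (β : ℝ), 0 < β →
        A *ᵥ (x₀ + Vm *ᵥ (Hinv *ᵥ (fun i => if (i : ℕ) = 0 then ((β : ℝ) : ℍ[ℝ]) else 0))) =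
          A *ᵥ x₀ + Vm *ᵥ (fun i => if (i : ℕ) = 0 then ((β : ℝ) : ℍ[ℝ]) else 0) := by
  -- Hm *ᵥ · is injective
  have hinj : ∀ α : Fin m → ℍ[ℝ], Hm *ᵥ α = 0 → α = 0 := by
    intro α hα
    apply hind
    have h1 : A *ᵥ (Vm *ᵥ α) = 0 := by
      rw [mulVec_mulVec, hAV, ← mulVec_mulVec, hα, mulVec_zero]
    have h2 := congrArg (fun v => Ainv *ᵥ v) h1
    simp only [mulVec_mulVec, mulVec_zero] at h2
    rwa [← Matrix.mul_assoc, hA.2, Matrix.one_mul] at h2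
  -- as ℝ-linear map
  let f : (Fin m → ℍ[ℝ]) →ₗ[ℝ] (Fin m → ℍ[ℝ]) :=
    { toFun := fun v => Hm *ᵥ v
      map_add' := fun v w => mulVec_add _ _ _
      map_smul' := fun r v => by
        funext i
        simp [Matrix.mulVec, dotProduct, Finset.smul_sum, mul_smul_comm] }
  have hfinj : Function.Injective f := by
    rw [injective_iff_map_eq_zero]
    intro a ha
    exact hinj a ha
  have hfsurj : Function.Surjective f :=
    (LinearMap.injective_iff_surjective (f := f)).mp hfinj
  -- build right inverse matrix from preimages of basis vectors
  choose g hg using hfsurj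
  let Hinv : Matrix (Fin m) (Fin m) ℍ[ℝ] :=
    Matrix.of fun i j => g (Pi.single j 1) i
  have hright : Hm * Hinv = 1 := by
    apply Matrix.ext
    intro i j
    have h := congrFun (hg (Pi.single j 1)) i
    simp only [f, LinearMap.coe_mk, AddHom.coe_mk, Matrix.mulVec, dotProduct] at h
    simp only [Matrix.mul_apply, Hinv, Matrix.of_apply, Matrix.one_apply]
    rw [h, Pi.single_apply]
  have hleft : Hinv * Hm = 1 := by
    have key : Hm * (Hinv * Hm - 1) = 0 := by
      rw [Matrix.mul_sub, ← Matrix.mul_assoc, hright, Matrix.one_mul, Matrix.mul_one, sub_self]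
    apply Matrix.ext
    intro i j
    have hcol : Hm *ᵥ (fun k => (Hinv * Hm - 1) k j) = 0 := by
      funext i'
      have hk := congrFun (congrFun key i') j
      calc (Hm *ᵥ fun k => (Hinv * Hm - 1) k j) i'
          = (Hm * (Hinv * Hm - 1)) i' j := rfl
        _ = (0 : Matrix (Fin m) (Fin m) ℍ[ℝ]) i' j := hk
        _ = (0 : Fin m → ℍ[ℝ]) i' := rfl
    have h0 := congrFun (hinj _ hcol) i
    have h1 : (Hinv * Hm) i j - (1 : Matrix (Fin m) (Fin m) ℍ[ℝ]) i j = 0 := by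
      simpa [Matrix.sub_apply] using h0
    exact sub_eq_zero.mp h1
  refine ⟨Hinv, hright, hleft, ?_⟩
  intro x₀ β hβ
  rw [Matrix.mulVec_add, mulVec_mulVec, hAV, ← mulVec_mulVec, mulVec_mulVec, mulVec_mulVec,
    Matrix.mul_assoc, hright, Matrix.mul_one]
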